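/- For every real number x ≠ 0 and every integer n ≥ 2, the supremum over integers k ≥ n of |x/k|^{1/(k−1)} equals max{1, |x/n|^{1/(n−1)}}. -/

import Mathlib

open Real Filter

/-- Lemma 2.2: for `x ≠ 0` and integer `n ≥ 2`,
`sup_{k ≥ n} |x/k|^{1/(k-1)} = max{1, |x/n|^{1/(n-1)}}`. -/
theorem sup_abs_rpow (x : ℝ) (hx : x ≠ 0) (n : ℕ) (hn : 2 ≤ n) :
    sSup {y : ℝ | ∃ k : ℕ, n ≤ k ∧ y = |x / (k : ℝ)| ^ ((1 : ℝ) / ((k : ℝ) - 1))} =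
      max 1 (|x / (n : ℝ)| ^ ((1 : ℝ) / ((n : ℝ) - 1))) := by
  set S : Set ℝ := {y : ℝ | ∃ k : ℕ, n ≤ k ∧ y = |x / (k : ℝ)| ^ ((1 : ℝ) / ((k : ℝ) - 1))}
  set M : ℝ := max 1 (|x / (n : ℝ)| ^ ((1 : ℝ) / ((n : ℝ) - 1))) with hM
  have hn1 : (1 : ℝ) ≤ (n : ℝ) - 1 := by
    have : (2 : ℝ) ≤ (n : ℝ) := by exact_mod_cast hn
    linarith
  have hub : ∀ y ∈ S, y ≤ M := by
    rintro y ⟨k, hk, rfl⟩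
    have hk2 : 2 ≤ k := le_trans hn hk
    have hk1 : (1 : ℝ) ≤ (k : ℝ) - 1 := by
      have : (2 : ℝ) ≤ (k : ℝ) := by exact_mod_cast hk2
      linarith
    have hkpos : (0 : ℝ) < (k : ℝ) := by positivity
    have hnpos : (0 : ℝ) < (n : ℝ) := by positivity
    have hepos : (0 : ℝ) ≤ (1 : ℝ) / ((k : ℝ) - 1) := by positivity
    rcases le_or_gt (|x|) (k : ℝ) with h | h
    · have hb : |x / (k : ℝ)| ≤ 1 := by
        rw [abs_div, abs_of_pos hkpos, div_le_one hkpos]; exact h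
      exact le_trans (Real.rpow_le_one (abs_nonneg _) hb hepos) (le_max_left _ _)
    · -- k < |x|, so base > 1
      have hkn : (n : ℝ) ≤ (k : ℝ) := by exact_mod_cast hk
      have hb1 : |x / (k : ℝ)| ≤ |x / (n : ℝ)| := by
        rw [abs_div, abs_div, abs_of_pos hkpos, abs_of_pos hnpos]
        exact div_le_div_of_nonneg_left (abs_nonneg _) hnpos hkn
      have hxn1 : (1 : ℝ) ≤ |x / (n : ℝ)| := by
        rw [abs_div, abs_of_pos hnpos, le_div_iff₀ hnpos, one_mul]
        exact le_trans hkn (le_of_lt h)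
      have step1 : |x / (k : ℝ)| ^ ((1 : ℝ) / ((k : ℝ) - 1)) ≤
          |x / (n : ℝ)| ^ ((1 : ℝ) / ((k : ℝ) - 1)) :=
        Real.rpow_le_rpow (abs_nonneg _) hb1 hepos
      have step2 : |x / (n : ℝ)| ^ ((1 : ℝ) / ((k : ℝ) - 1)) ≤
          |x / (n : ℝ)| ^ ((1 : ℝ) / ((n : ℝ) - 1)) := by
        apply Real.rpow_le_rpow_of_exponent_le hxn1
        apply div_le_div_of_nonneg_left zero_le_one (by linarith) (by linarith)
      exact le_trans (le_trans step1 step2) (le_max_right _ _)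
  have hne : S.Nonempty := ⟨_, ⟨n, le_refl n, rfl⟩⟩
  have hbdd : BddAbove S := ⟨M, hub⟩
  apply le_antisymm (csSup_le hne hub)
  apply max_le
  · -- 1 ≤ sSup S via limit
    have htend : Tendsto (fun k : ℕ => |x / (k : ℝ)| ^ ((1 : ℝ) / ((k : ℝ) - 1)))
        atTop (nhds 1) := by
      have h1 : Tendsto (fun k : ℕ => Real.log |x| / ((k : ℝ) - 1)) atTop (nhds 0) := by
        apply Tendsto.div_atTop tendsto_const_nhds
        exact tendsto_atTop_add_const_right _ _ tendsto_natCast_atTop_atTop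
      have h2 : Tendsto (fun k : ℕ => Real.log (k : ℝ) / ((k : ℝ) - 1)) atTop (nhds 0) := by
        have := (Real.tendsto_pow_log_div_mul_add_atTop 1 (-1) 1 one_ne_zero).comp
          tendsto_natCast_atTop_atTop
        simpa [Function.comp_def, sub_eq_add_neg] using this
      have h3 : Tendsto (fun k : ℕ => (Real.log |x| - Real.log (k : ℝ)) / ((k : ℝ) - 1))
          atTop (nhds 0) := by
        have := h1.sub h2
        simpa [sub_div] using this
      have h4 := (Real.continuous_exp.tendsto 0).comp h3
      rw [Real.exp_zero] at h4
      apply h4.congr'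
      filter_upwards [eventually_ge_atTop 2] with k hk
      have hkpos : (0 : ℝ) < (k : ℝ) := by
        have : (2:ℝ) ≤ (k:ℝ) := by exact_mod_cast hk
        linarith
      have hxk : (0 : ℝ) < |x / (k : ℝ)| := by
        apply abs_pos.mpr
        exact div_ne_zero hx (ne_of_gt hkpos)
      simp only [Function.comp]
      rw [Real.rpow_def_of_pos hxk, abs_div, abs_of_pos hkpos,
        Real.log_div (abs_ne_zero.mpr hx) (ne_of_gt hkpos), Real.log_abs]
      ring_nf
    have hupper : ∀ᶠ k : ℕ in atTop, |x / (k : ℝ)| ^ ((1 : ℝ) / ((k : ℝ) - 1)) ≤ sSup S := by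
      filter_upwards [eventually_ge_atTop n] with k hk
      exact le_csSup hbdd ⟨k, hk, rfl⟩
    exact le_of_tendsto htend hupper
  · exact le_csSup hbdd ⟨n, le_refl n, rfl⟩
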